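/- Let O ∈ ℝ^{n×m} have all centered columns Ō_j nonzero, let μ ∈ ℝ^m, let σ ∈ ℝ^m with σ_j > 0 for all j, let N ∈ ℝ^{m×m} be the diagonal matrix with N_{jj} = σ_j√n/‖Ō_j‖, and let T = 𝟙μᵀ ∈ ℝ^{n×m}. Then a matrix Ŝ ∈ ℝ^{n×m} satisfies Mean(Ŝ_j) = μ_j and Var(Ŝ_j) = σ_j² for all j and Corr(Ŝ) = Corr(O) if and only if there exists an orthogonal matrix Q ∈ ℝ^{n×n} such that 𝟙ᵀ(Q Ō N) = 0 and Ŝ = Q Ō N + T. -/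

import Mathlib

open Matrix

/-- Euclidean dot product on `ℝ^n`. -/
noncomputable def dotv {n : ℕ} (u v : Fin n → ℝ) : ℝ := ∑ i, u i * v i

/-- Euclidean norm on `ℝ^n`. -/
noncomputable def enormv {n : ℕ} (u : Fin n → ℝ) : ℝ := Real.sqrt (dotv u u)

/-- Arithmetic mean of a vector. -/
noncomputable def meanv {n : ℕ} (f : Fin n → ℝ) : ℝ := (∑ i, f i) / n

/-- Mean-centered vector `f̄ = f - Mean(f)·𝟙`. -/
noncomputable def centv {n : ℕ} (f : Fin n → ℝ) : Fin n → ℝ := fun i => f i - meanv f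

/-- Variance of a vector: `Var(f) = (1/n)‖f̄‖²`. -/
noncomputable def varv {n : ℕ} (f : Fin n → ℝ) : ℝ := (∑ i, (centv f i) ^ 2) / n

/-- The `j`-th column of a matrix. -/
noncomputable def matCol {n m : ℕ} (A : Matrix (Fin n) (Fin m) ℝ) (j : Fin m) : Fin n → ℝ :=
  fun i => A i j

/-- Cosine similarity matrix: `S_c(A)_{jk} = (A_j·A_k)/(‖A_j‖‖A_k‖)`. -/
noncomputable def cosSim {n m : ℕ} (A : Matrix (Fin n) (Fin m) ℝ) : Matrix (Fin m) (Fin m) ℝ :=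
  fun j k => dotv (matCol A j) (matCol A k) / (enormv (matCol A j) * enormv (matCol A k))

/-- Column-wise mean centering of a matrix: `Ā_j = A_j − Mean(A_j)·𝟙`. -/
noncomputable def centM {n m : ℕ} (A : Matrix (Fin n) (Fin m) ℝ) : Matrix (Fin n) (Fin m) ℝ :=
  fun i j => A i j - meanv (matCol A j)

/-- Pearson correlation matrix: cosine similarity of the centered columns. -/
noncomputable def corrM {n m : ℕ} (A : Matrix (Fin n) (Fin m) ℝ) : Matrix (Fin m) (Fin m) ℝ :=
  cosSim (centM A)

/-- Frobenius norm of a matrix. -/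
noncomputable def frob {n m : ℕ} (A : Matrix (Fin n) (Fin m) ℝ) : ℝ :=
  Real.sqrt (∑ i, ∑ j, (A i j) ^ 2)

/-- Given the diagonal entries `σ` of a diagonal matrix `Σ` with nonnegative entries,
`Isig σ` is the diagonal matrix `I_Σ` with `(I_Σ)_{ii} = 1` if `Σ_{ii} > 0` and `0` otherwise. -/
noncomputable def Isig {n : ℕ} (σ : Fin n → ℝ) : Matrix (Fin n) (Fin n) ℝ :=
  Matrix.diagonal (fun i => if 0 < σ i then (1 : ℝ) else 0)

lemma dotv_eq_dot {n : ℕ} (u v : Fin n → ℝ) : dotv u v = u ⬝ᵥ v := rfl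

lemma dotv_self_nonneg {n : ℕ} (u : Fin n → ℝ) : 0 ≤ dotv u u :=
  Finset.sum_nonneg fun i _ => mul_self_nonneg _

lemma enormv_sq {n : ℕ} (u : Fin n → ℝ) : enormv u ^ 2 = dotv u u :=
  Real.sq_sqrt (dotv_self_nonneg u)

lemma enormv_nonneg {n : ℕ} (u : Fin n → ℝ) : 0 ≤ enormv u := Real.sqrt_nonneg _

lemma enormv_pos {n : ℕ} (u : Fin n → ℝ) (hu : u ≠ 0) : 0 < enormv u := by
  apply Real.sqrt_pos.mpr
  rcases (dotv_self_nonneg u).lt_or_eq with h | h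
  · exact h
  · exfalso
    apply hu
    funext i
    have h0 : ∀ i ∈ Finset.univ, (0:ℝ) ≤ u i * u i := fun i _ => mul_self_nonneg _
    have := (Finset.sum_eq_zero_iff_of_nonneg h0).mp h.symm i (Finset.mem_univ i)
    have := mul_self_eq_zero.mp this
    simpa using this

lemma dotv_self_eq_sum_sq {n : ℕ} (u : Fin n → ℝ) : dotv u u = ∑ i, u i ^ 2 := by
  unfold dotv
  refine Finset.sum_congr rfl fun i _ => (sq (u i)).symm ▸ rfl

lemma dotv_mulc {n : ℕ} (u v : Fin n → ℝ) (a b : ℝ) :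
    dotv (fun i => u i * a) (fun i => v i * b) = a * b * dotv u v := by
  unfold dotv
  rw [Finset.mul_sum]
  exact Finset.sum_congr rfl fun i _ => by ring

lemma sum_centv {n : ℕ} (hn : 0 < n) (f : Fin n → ℝ) : ∑ i, centv f i = 0 := by
  have hnR : ((n:ℝ)) ≠ 0 := by positivity
  simp only [centv, meanv, Finset.sum_sub_distrib, Finset.sum_const, Finset.card_univ,
    Fintype.card_fin, nsmul_eq_mul]
  field_simp
  ring

lemma col_centM {n m : ℕ} (A : Matrix (Fin n) (Fin m) ℝ) (j : Fin m) :
    matCol (centM A) j = centv (matCol A j) := rfl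

lemma gram_entry {n m : ℕ} (A : Matrix (Fin n) (Fin m) ℝ) (j k : Fin m) :
    (Aᵀ * A) j k = dotv (matCol A j) (matCol A k) := by
  simp [Matrix.mul_apply, dotv, matCol, Matrix.transpose_apply]

lemma gram_dot {n m : ℕ} (A : Matrix (Fin n) (Fin m) ℝ) (x y : Fin m → ℝ) :
    (A *ᵥ x) ⬝ᵥ (A *ᵥ y) = x ⬝ᵥ ((Aᵀ * A) *ᵥ y) := by
  rw [← Matrix.vecMul_transpose, Matrix.dotProduct_mulVec, Matrix.vecMul_vecMul,
    ← Matrix.dotProduct_mulVec]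

lemma dot_mulVec_of_orth {n : ℕ} (Q : Matrix (Fin n) (Fin n) ℝ) (hQ : Qᵀ * Q = 1)
    (u v : Fin n → ℝ) : dotv (Q *ᵥ u) (Q *ᵥ v) = dotv u v := by
  rw [dotv_eq_dot, dotv_eq_dot, gram_dot, hQ, Matrix.one_mulVec]

lemma col_mul {n m : ℕ} (X : Matrix (Fin n) (Fin n) ℝ) (Y : Matrix (Fin n) (Fin m) ℝ)
    (j : Fin m) : matCol (X * Y) j = X *ᵥ matCol Y j := by
  funext i
  simp [matCol, Matrix.mul_apply, Matrix.mulVec, dotProduct]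

lemma exists_orthogonal_of_gram_eq {n m : ℕ} (A B : Matrix (Fin n) (Fin m) ℝ)
    (h : Aᵀ * A = Bᵀ * B) :
    ∃ Q : Matrix (Fin n) (Fin n) ℝ, Qᵀ * Q = 1 ∧ Q * A = B := by
  classical
  set V := EuclideanSpace ℝ (Fin n) with hV
  let e : (Fin n → ℝ) ≃ₗ[ℝ] V := (WithLp.linearEquiv 2 ℝ (Fin n → ℝ)).symm
  let L : (Fin m → ℝ) →ₗ[ℝ] V := e.toLinearMap ∘ₗ A.mulVecLin
  let M : (Fin m → ℝ) →ₗ[ℝ] V := e.toLinearMap ∘ₗ B.mulVecLin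
  have inner_e : ∀ u v : Fin n → ℝ, inner ℝ (e u) (e v) = u ⬝ᵥ v := by
    intro u v
    simp only [PiLp.inner_apply, RCLike.inner_apply, dotProduct]
    change inner ℝ (WithLp.toLp 2 u : EuclideanSpace ℝ (Fin n)) (WithLp.toLp 2 v) = _
    simp [PiLp.inner_apply, mul_comm]
  have key : ∀ x y, inner ℝ (L x) (L y) = inner ℝ (M x) (M y) := by
    intro x y
    show inner ℝ (e (A *ᵥ x)) (e (A *ᵥ y)) = inner ℝ (e (B *ᵥ x)) (e (B *ᵥ y))
    rw [inner_e, inner_e, gram_dot, gram_dot, h]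
  have norm_LM : ∀ x, ‖M x‖ = ‖L x‖ := by
    intro x
    have h1 : ‖M x‖ ^ 2 = ‖L x‖ ^ 2 := by
      rw [← real_inner_self_eq_norm_sq, ← real_inner_self_eq_norm_sq, key]
    calc ‖M x‖ = Real.sqrt (‖M x‖ ^ 2) := (Real.sqrt_sq (norm_nonneg _)).symm
      _ = Real.sqrt (‖L x‖ ^ 2) := by rw [h1]
      _ = ‖L x‖ := Real.sqrt_sq (norm_nonneg _)
  have hker : LinearMap.ker L ≤ LinearMap.ker M := by
    intro x hx
    rw [LinearMap.mem_ker] at hx ⊢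
    have := norm_LM x
    rw [hx, norm_zero, norm_eq_zero] at this
    exact this
  let f : LinearMap.range L →ₗ[ℝ] V :=
    ((LinearMap.ker L).liftQ M hker) ∘ₗ (LinearMap.quotKerEquivRange L).symm.toLinearMap
  have hf : ∀ x : Fin m → ℝ, f ⟨L x, LinearMap.mem_range_self L x⟩ = M x := by
    intro x
    have h1 : (LinearMap.quotKerEquivRange L).symm ⟨L x, LinearMap.mem_range_self L x⟩
        = Submodule.Quotient.mk x := by
      apply (LinearMap.quotKerEquivRange L).injective
      rw [LinearEquiv.apply_symm_apply]
      exact Subtype.ext (LinearMap.quotKerEquivRange_apply_mk L x).symm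
    show ((LinearMap.ker L).liftQ M hker)
      ((LinearMap.quotKerEquivRange L).symm ⟨L x, LinearMap.mem_range_self L x⟩) = M x
    rw [h1]
    exact Submodule.liftQ_apply _ M x
  let φ : LinearMap.range L →ₗᵢ[ℝ] V :=
    ⟨f, by
      rintro ⟨v, x, hx⟩
      have : (⟨v, x, hx⟩ : LinearMap.range L) = ⟨L x, LinearMap.mem_range_self L x⟩ := by
        simp [hx]
      rw [this, hf]
      simp only [Submodule.coe_norm]
      exact norm_LM x⟩
  let Φ := φ.extend
  have hΦ : ∀ x, Φ (L x) = M x := by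
    intro x
    have := φ.extend_apply ⟨L x, LinearMap.mem_range_self L x⟩
    have h2 : φ ⟨L x, LinearMap.mem_range_self L x⟩ = M x := hf x
    rw [h2] at this
    exact this
  let Φ' : (Fin n → ℝ) →ₗ[ℝ] (Fin n → ℝ) :=
    e.symm.toLinearMap ∘ₗ Φ.toLinearMap ∘ₗ e.toLinearMap
  set Q := LinearMap.toMatrix' Φ' with hQ
  have hQv : ∀ v, Q *ᵥ v = Φ' v := by
    intro v
    rw [hQ, ← Matrix.toLin'_apply, Matrix.toLin'_toMatrix']
  have heΦ' : ∀ v : Fin n → ℝ, e (Φ' v) = Φ (e v) := by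
    intro v
    show e (e.symm (Φ (e v))) = Φ (e v)
    rw [LinearEquiv.apply_symm_apply]
  have hdot : ∀ u v : Fin n → ℝ, (Q *ᵥ u) ⬝ᵥ (Q *ᵥ v) = u ⬝ᵥ v := by
    intro u v
    rw [hQv, hQv, ← inner_e, heΦ', heΦ', Φ.inner_map_map, inner_e]
  refine ⟨Q, ?_, ?_⟩
  · ext i j
    have hcol : ∀ i : Fin n, Q *ᵥ Pi.single i 1 = fun k => Q k i := by
      intro i
      funext k
      simp [Matrix.mulVec, dotProduct, Pi.single_apply]
    have h1 := hdot (Pi.single i 1) (Pi.single j 1)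
    rw [hcol, hcol] at h1
    have h2 : (fun k => Q k i) ⬝ᵥ (fun k => Q k j) = (Qᵀ * Q) i j := by
      simp [Matrix.mul_apply, dotProduct, Matrix.transpose_apply]
    have h3 : Pi.single i (1:ℝ) ⬝ᵥ Pi.single j 1 = (1 : Matrix (Fin n) (Fin n) ℝ) i j := by
      rw [Matrix.one_apply]
      by_cases hij : i = j
      · subst hij; simp [dotProduct, Pi.single_apply]
      · simp [dotProduct, Pi.single_apply, hij, Ne.symm hij]
    rw [h2, h3] at h1
    exact h1
  · have hQA : ∀ x : Fin m → ℝ, Q *ᵥ (A *ᵥ x) = B *ᵥ x := by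
      intro x
      rw [hQv]
      show e.symm (Φ (e (A *ᵥ x))) = B *ᵥ x
      have hL : e (A *ᵥ x) = L x := rfl
      rw [hL, hΦ]
      show e.symm (e (B *ᵥ x)) = B *ᵥ x
      rw [LinearEquiv.symm_apply_apply]
    apply Matrix.toLin'.injective
    apply LinearMap.ext
    intro v
    rw [Matrix.toLin'_apply, Matrix.toLin'_apply, ← Matrix.mulVec_mulVec, hQA]

/-- Characterization of all matrices with prescribed means `μ`, variances
`σ²` and Pearson correlation matrix equal to that of `O`: they are exactly the matrices
of the form `Q Ō N + T` with `Q` orthogonal and `𝟙ᵀ(Q Ō N) = 0`. -/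
theorem mean_var_corr_iff_orthogonal_form {n m : ℕ}
    (O : Matrix (Fin n) (Fin m) ℝ) (hO : ∀ j, matCol (centM O) j ≠ 0)
    (μ σ : Fin m → ℝ) (hσ : ∀ j, 0 < σ j)
    (N : Matrix (Fin m) (Fin m) ℝ)
    (hN : N = Matrix.diagonal (fun j => σ j * Real.sqrt n / enormv (matCol (centM O) j)))
    (T : Matrix (Fin n) (Fin m) ℝ) (hT : T = fun _ j => μ j)
    (Shat : Matrix (Fin n) (Fin m) ℝ) :
    ((∀ j, meanv (matCol Shat j) = μ j) ∧ (∀ j, varv (matCol Shat j) = (σ j) ^ 2) ∧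
      corrM Shat = corrM O) ↔
    ∃ Q : Matrix (Fin n) (Fin n) ℝ, Qᵀ * Q = 1 ∧
      Matrix.vecMul (fun _ => (1 : ℝ)) (Q * centM O * N) = 0 ∧
      Shat = Q * centM O * N + T := by

  by_cases hm : m = 0
  · subst hm
    constructor
    · rintro -
      refine ⟨1, by simp, funext fun j => j.elim0, ?_⟩
      funext i j
      exact j.elim0
    · rintro -
      exact ⟨fun j => j.elim0, fun j => j.elim0, funext fun j => j.elim0⟩
  · have hn : 0 < n := by
      rcases Nat.eq_zero_or_pos n with h0 | h0
      · exfalso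
        exact hO ⟨0, Nat.pos_of_ne_zero hm⟩ (by subst h0; funext i; exact i.elim0)
      · exact h0
    have hnR : (0:ℝ) < (n:ℕ) := by exact_mod_cast hn
    have hnne : ((n:ℝ)) ≠ 0 := ne_of_gt hnR
    have hsqpos : 0 < Real.sqrt n := Real.sqrt_pos.mpr hnR
    have hsq2 : Real.sqrt n ^ 2 = (n:ℝ) := Real.sq_sqrt hnR.le
    set E : Fin m → ℝ := fun j => enormv (matCol (centM O) j) with hE
    have hEpos : ∀ j, 0 < E j := fun j => enormv_pos _ (hO j)
    set d : Fin m → ℝ := fun j => σ j * Real.sqrt n / E j with hd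
    have hdpos : ∀ j, 0 < d j := fun j => div_pos (mul_pos (hσ j) hsqpos) (hEpos j)
    have hE2 : ∀ j, E j ^ 2 = dotv (matCol (centM O) j) (matCol (centM O) j) := fun j => enormv_sq _
    have hcolON : ∀ j, matCol (centM O * N) j = fun i => centM O i j * d j := by
      intro j
      funext i
      simp [matCol, hN, Matrix.mul_diagonal, hd]
    have hdotON : ∀ j k, dotv (matCol (centM O * N) j) (matCol (centM O * N) k)
        = d j * d k * dotv (matCol (centM O) j) (matCol (centM O) k) := by
      intro j k
      rw [hcolON, hcolON]
      exact dotv_mulc _ _ _ _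
    constructor
    · rintro ⟨h1, h2, h3⟩
      have hdotS : ∀ j, dotv (matCol (centM Shat) j) (matCol (centM Shat) j) = σ j ^ 2 * n := by
        intro j
        have hv := h2 j
        rw [col_centM, dotv_self_eq_sum_sq]
        have hvv : (∑ i, centv (matCol Shat j) i ^ 2) = varv (matCol Shat j) * n := by
          unfold varv
          field_simp
        rw [hvv, hv]
      have hnormS : ∀ j, enormv (matCol (centM Shat) j) = σ j * Real.sqrt n := by
        intro j
        unfold enormv
        rw [hdotS j, show σ j ^ 2 * (n:ℝ) = (σ j * Real.sqrt n)^2 by rw [mul_pow, hsq2]]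
        exact Real.sqrt_sq (mul_nonneg (hσ j).le hsqpos.le)
      have hgram : (centM O * N)ᵀ * (centM O * N) = (centM Shat)ᵀ * (centM Shat) := by
        ext j k
        rw [gram_entry, gram_entry, hdotON]
        have hc := congr_fun (congr_fun h3 j) k
        simp only [corrM, cosSim] at hc
        rw [hnormS j, hnormS k] at hc
        have hab : (σ j * Real.sqrt n) * (σ k * Real.sqrt n) ≠ 0 :=
          ne_of_gt (mul_pos (mul_pos (hσ j) hsqpos) (mul_pos (hσ k) hsqpos))
        have hX : dotv (matCol (centM Shat) j) (matCol (centM Shat) k)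
            = (σ j * Real.sqrt n) * (σ k * Real.sqrt n) *
              (dotv (matCol (centM O) j) (matCol (centM O) k) / (E j * E k)) := by
          rw [← hc]
          field_simp
          rw [mul_assoc, mul_div_assoc, div_self (mul_ne_zero (hσ j).ne' (hσ k).ne'), mul_one]
        rw [hX]
        simp only [hd]
        have hEj := (hEpos j).ne'
        have hEk := (hEpos k).ne'
        field_simp
        try ring
      obtain ⟨Q, hQ1, hQ2⟩ := exists_orthogonal_of_gram_eq _ _ hgram
      have hQA : Q * centM O * N = centM Shat := by rw [Matrix.mul_assoc, hQ2]
      refine ⟨Q, hQ1, ?_, ?_⟩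
      · rw [hQA]
        funext j
        have hz : ∑ i, centv (matCol Shat j) i = 0 := sum_centv hn _
        simpa [Matrix.vecMul, dotProduct, centM, centv, matCol] using hz
      · rw [hQA, hT]
        funext i j
        show Shat i j = centM Shat i j + μ j
        simp [centM, h1 j]
    · rintro ⟨Q, hQ1, hQ2, hQ3⟩
      set Ahat := Q * (centM O * N) with hA
      have hassoc : Q * centM O * N = Ahat := Matrix.mul_assoc _ _ _
      rw [hassoc] at hQ2 hQ3
      have hsum : ∀ j, ∑ i, Ahat i j = 0 := by
        intro j
        have h := congr_fun hQ2 j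
        simpa [Matrix.vecMul, dotProduct] using h
      have hSentry : ∀ i j, Shat i j = Ahat i j + μ j := by
        intro i j
        rw [hQ3, hT]
        rfl
      have hmean : ∀ j, meanv (matCol Shat j) = μ j := by
        intro j
        unfold meanv
        rw [show ∑ i, matCol Shat j i = ∑ i, (Ahat i j + μ j) from
          Finset.sum_congr rfl fun i _ => hSentry i j]
        rw [Finset.sum_add_distrib, hsum j]
        simp only [Finset.sum_const, Finset.card_univ, Fintype.card_fin, nsmul_eq_mul, zero_add]
        field_simp
      have hcent : ∀ i j, centM Shat i j = Ahat i j := by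
        intro i j
        show Shat i j - meanv (matCol Shat j) = Ahat i j
        rw [hSentry, hmean]
        ring
      have hcolA : ∀ j, matCol Ahat j = Q *ᵥ (matCol (centM O * N) j) := fun j => col_mul Q _ j
      have hdotA : ∀ j k, dotv (matCol Ahat j) (matCol Ahat k)
          = d j * d k * dotv (matCol (centM O) j) (matCol (centM O) k) := by
        intro j k
        rw [hcolA, hcolA, dot_mulVec_of_orth Q hQ1, hdotON]
      have hdd : ∀ j, d j * d j * (E j)^2 = σ j ^ 2 * n := by
        intro j
        have hEj := (hEpos j).ne'
        simp only [hd]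
        field_simp
        ring_nf
        rw [hsq2]
      have hvar : ∀ j, varv (matCol Shat j) = σ j ^ 2 := by
        intro j
        unfold varv
        have hsum2 : ∑ i, centv (matCol Shat j) i ^ 2 = dotv (matCol Ahat j) (matCol Ahat j) := by
          rw [dotv_self_eq_sum_sq]
          exact Finset.sum_congr rfl fun i _ => by
            rw [show centv (matCol Shat j) i = Ahat i j from hcent i j]
            rfl
        rw [hsum2, hdotA, ← hE2 j, hdd j]
        field_simp
      have hnormA : ∀ j, enormv (matCol Ahat j) = d j * E j := by
        intro j
        unfold enormv
        rw [hdotA, ← hE2 j, show d j * d j * E j ^ 2 = (d j * E j)^2 by ring]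
        exact Real.sqrt_sq (mul_nonneg (hdpos j).le (hEpos j).le)
      refine ⟨hmean, hvar, ?_⟩
      funext j k
      show cosSim (centM Shat) j k = cosSim (centM O) j k
      unfold cosSim
      have hcolcent : ∀ j, matCol (centM Shat) j = matCol Ahat j := by
        intro j
        funext i
        exact hcent i j
      rw [hcolcent, hcolcent, hdotA, hnormA, hnormA]
      have hEj := (hEpos j).ne'
      have hEk := (hEpos k).ne'
      have hdj := (hdpos j).ne'
      have hdk := (hdpos k).ne'
      field_simp
      change _ = _ * E j * E k / (E j * E k)
      rw [mul_assoc, mul_div_assoc, div_self (mul_ne_zero hEj hEk), mul_one]
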